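/- arXiv:1601.06051 — 2 statements merged into one kernel-verified Lean document; each statement's English description precedes it below -/
import Mathlib

section
/- Let w : ℝ → ℝ be C¹ with support in [0,1]. Let f : 𝕋^d → ℂ be continuous and ρ ∈ ℝ^d. Define U f(θ) = f(θ + ρ). Then |Σ_{n=0}^{N-1} w(n/N) (Uf - f)(nρ)| ≤ ‖f‖_∞ · ‖w'‖_∞, where the argument nρ is taken mod 1 in each coordinate. Equivalently, (1/N) Σ_n w(n/N)(Uf - f)(nρ) is bounded in absolute value by (1/N)‖f‖_∞‖w'‖_∞. -/
theorem stmt_4 (d : ℕ) (w : ℝ → ℝ) (hw : ContDiff ℝ 1 w)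
    (hsupp : Function.support w ⊆ Set.Icc 0 1)
    (f : (Fin d → AddCircle (1:ℝ)) → ℂ) (hf : Continuous f)
    (ρ : Fin d → ℝ) (N : ℕ) :
    ‖∑ n ∈ Finset.range N, (w (n / N) : ℂ) *
        (f ((fun i => (((n : ℝ) * ρ i : ℝ) : AddCircle (1:ℝ))) + fun i => ((ρ i : ℝ) : AddCircle (1:ℝ))) -
         f (fun i => (((n : ℝ) * ρ i : ℝ) : AddCircle (1:ℝ))))‖ ≤
      (⨆ θ, ‖f θ‖) * (⨆ t, ‖deriv w t‖) := by
  set M := ⨆ θ, ‖f θ‖ with hMdef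
  set C := ⨆ t, ‖deriv w t‖ with hCdef
  -- bound on f
  have hMb : ∀ θ, ‖f θ‖ ≤ M :=
    fun θ => le_ciSup (isCompact_range hf.norm).bddAbove θ
  have hM0 : (0:ℝ) ≤ M := (norm_nonneg _).trans (hMb fun _ => 0)
  -- w vanishes outside [0,1]
  have hzero : ∀ x, x ∉ Set.Icc (0:ℝ) 1 → w x = 0 :=
    fun x hx => Function.notMem_support.mp (fun h => hx (hsupp h))
  -- compact support of deriv w, hence bounded
  have hcs : HasCompactSupport w :=
    HasCompactSupport.intro isCompact_Icc hzero
  have hderiv_cont : Continuous (deriv w) := hw.continuous_deriv le_rfl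
  have hcsd : HasCompactSupport (deriv w) := hcs.deriv
  have hb2 : BddAbove (Set.range fun t => ‖deriv w t‖) :=
    IsCompact.bddAbove (hcsd.norm.isCompact_range hderiv_cont.norm)
  have hCb : ∀ t, ‖deriv w t‖ ≤ C := fun t => le_ciSup hb2 t
  have hC0 : (0:ℝ) ≤ C := (norm_nonneg _).trans (hCb 0)
  -- MVT bound
  have hlip : ∀ a b : ℝ, |w b - w a| ≤ C * |b - a| := by
    intro a b
    have := Convex.norm_image_sub_le_of_norm_deriv_le (s := Set.univ) (f := w) (C := C)
      (fun x _ => (hw.differentiable one_ne_zero).differentiableAt)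
      (fun x _ => hCb x) convex_univ (Set.mem_univ a) (Set.mem_univ b)
    simpa [Real.norm_eq_abs] using this
  -- endpoint values
  have hw0 : w 0 = 0 := by
    have h1 : Filter.Tendsto w (nhdsWithin 0 (Set.Iio 0)) (nhds (w 0)) :=
      (hw.continuous.tendsto 0).mono_left nhdsWithin_le_nhds
    have h2 : Filter.Tendsto w (nhdsWithin 0 (Set.Iio 0)) (nhds 0) := by
      refine Filter.Tendsto.congr' ?_ tendsto_const_nhds
      filter_upwards [self_mem_nhdsWithin] with x hx
      exact (hzero x (fun hmem => absurd hmem.1 (not_le.mpr hx))).symm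
    exact tendsto_nhds_unique h1 h2
  have hw1 : w 1 = 0 := by
    have h1 : Filter.Tendsto w (nhdsWithin 1 (Set.Ioi 1)) (nhds (w 1)) :=
      (hw.continuous.tendsto 1).mono_left nhdsWithin_le_nhds
    have h2 : Filter.Tendsto w (nhdsWithin 1 (Set.Ioi 1)) (nhds 0) := by
      refine Filter.Tendsto.congr' ?_ tendsto_const_nhds
      filter_upwards [self_mem_nhdsWithin] with x hx
      exact (hzero x (fun hmem => absurd hmem.2 (not_le.mpr hx))).symm
    exact tendsto_nhds_unique h1 h2
  rcases Nat.eq_zero_or_pos N with hN | hN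
  · subst hN; simp [mul_nonneg hM0 hC0]
  have hNR : (0:ℝ) < N := by exact_mod_cast hN
  set g : ℕ → ℂ := fun n => f (fun i => (((n:ℝ) * ρ i : ℝ) : AddCircle (1:ℝ))) with hgdef
  have hpt : ∀ n : ℕ,
      f ((fun i => (((n : ℝ) * ρ i : ℝ) : AddCircle (1:ℝ))) + fun i => ((ρ i : ℝ) : AddCircle (1:ℝ)))
        = g (n+1) := by
    intro n
    congr 1
    funext i
    show (((n:ℝ) * ρ i : ℝ) : AddCircle (1:ℝ)) + ((ρ i : ℝ) : AddCircle (1:ℝ))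
        = ((((n:ℕ)+1 : ℕ) : ℝ) * ρ i : ℝ)
    rw [← AddCircle.coe_add]
    congr 1
    push_cast
    ring
  -- rewrite the sum
  have hsum : ∑ n ∈ Finset.range N, (w (n / N) : ℂ) *
        (f ((fun i => (((n : ℝ) * ρ i : ℝ) : AddCircle (1:ℝ))) + fun i => ((ρ i : ℝ) : AddCircle (1:ℝ))) -
         f (fun i => (((n : ℝ) * ρ i : ℝ) : AddCircle (1:ℝ))))
      = ∑ n ∈ Finset.range N, (w (n / N) : ℂ) * (g (n+1) - g n) := by
    refine Finset.sum_congr rfl fun n _ => ?_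
    rw [hpt n]
  -- telescoping / summation by parts
  have htel : ∑ n ∈ Finset.range N,
        ((w (((n:ℕ)+1 : ℕ) / N : ℝ) : ℂ) * g (n+1) - (w ((n:ℕ) / N : ℝ) : ℂ) * g n)
      = (w ((N:ℝ) / N) : ℂ) * g N - (w ((0:ℝ) / N) : ℂ) * g 0 := by
    have := Finset.sum_range_sub (fun n : ℕ => (w ((n:ℕ) / N : ℝ) : ℂ) * g n) N
    simpa using this
  have hzero' : (w ((N:ℝ) / N) : ℂ) * g N - (w ((0:ℝ) / N) : ℂ) * g 0 = 0 := by
    rw [div_self hNR.ne', zero_div, hw0, hw1]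
    simp
  have key : ∑ n ∈ Finset.range N, (w (n / N) : ℂ) * (g (n+1) - g n)
      = ∑ n ∈ Finset.range N, ((w ((n:ℕ) / N : ℝ) : ℂ) - (w (((n:ℕ)+1 : ℕ) / N : ℝ) : ℂ)) * g (n+1) := by
    rw [← sub_eq_zero, ← Finset.sum_sub_distrib]
    rw [← hzero', ← htel]
    refine Finset.sum_congr rfl fun n _ => ?_
    push_cast
    ring
  rw [hsum, key]
  calc ‖∑ n ∈ Finset.range N, ((w ((n:ℕ) / N : ℝ) : ℂ) - (w (((n:ℕ)+1 : ℕ) / N : ℝ) : ℂ)) * g (n+1)‖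
      ≤ ∑ n ∈ Finset.range N, ‖((w ((n:ℕ) / N : ℝ) : ℂ) - (w (((n:ℕ)+1 : ℕ) / N : ℝ) : ℂ)) * g (n+1)‖ :=
        norm_sum_le _ _
    _ ≤ ∑ n ∈ Finset.range N, (C * (1/N)) * M := by
        refine Finset.sum_le_sum fun n _ => ?_
        rw [norm_mul]
        refine mul_le_mul ?_ (hMb _) (norm_nonneg _) (by positivity)
        have h1 : ‖((w ((n:ℕ) / N : ℝ) : ℂ) - (w (((n:ℕ)+1 : ℕ) / N : ℝ) : ℂ))‖
            = |w ((n:ℕ) / N : ℝ) - w (((n:ℕ)+1 : ℕ) / N : ℝ)| := by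
          rw [← Complex.ofReal_sub, Complex.norm_real, Real.norm_eq_abs]
        rw [h1]
        have h2 := hlip (((n:ℕ)+1 : ℕ) / N : ℝ) ((n:ℕ) / N : ℝ)
        have h3 : |((n:ℕ) / N : ℝ) - (((n:ℕ)+1 : ℕ) / N : ℝ)| = 1/N := by
          push_cast
          have he : ((n:ℝ)) / N - ((n:ℝ)+1) / N = -(1/N) := by ring
          rw [he, abs_neg, abs_of_nonneg (by positivity)]
        calc |w ((n:ℕ) / N : ℝ) - w (((n:ℕ)+1 : ℕ) / N : ℝ)|
            ≤ C * |((n:ℕ) / N : ℝ) - (((n:ℕ)+1 : ℕ) / N : ℝ)| := h2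
          _ = C * (1/N) := by rw [h3]
    _ = (C * (1/N)) * M * N := by rw [Finset.sum_const, Finset.card_range]; ring
    _ = M * C := by field_simp
end

section
/- Let w : ℝ → ℝ be C^m with support in [0,1] (so w and its first m-1 derivatives vanish at 0 and 1). Then there exists c_m > 0 depending only on w and m such that for every continuous f : 𝕋^d → ℂ, every ρ ∈ ℝ^d, and every N ≥ 1, |(1/N) Σ_{n=0}^{N-1} w(n/N) ((U - I)^m f)(nρ)| ≤ c_m N^{-m} ‖f‖_∞, where (Uf)(θ) = f(θ + ρ). -/
open Finset

/-- backward-difference-type operator on real functions -/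
private def Td (h : ℝ) : (ℝ → ℝ) → (ℝ → ℝ) := fun u => fun y => u (y - h) - u y

/-- forward difference on sequences -/
private def De : (ℕ → ℂ) → (ℕ → ℂ) := fun v => fun n => v (n + 1) - v n

/-- (negated) backward difference on sequences -/
private def Na : (ℕ → ℂ) → (ℕ → ℂ) := fun u => fun n => u (n - 1) - u n

private lemma iteratedDeriv_my_sub {q : ℕ} {A B : ℝ → ℝ} (hA : ContDiff ℝ q A)
    (hB : ContDiff ℝ q B) (x : ℝ) :
    iteratedDeriv q (fun y => A y - B y) x = iteratedDeriv q A x - iteratedDeriv q B x := by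
  have h1 : iteratedDeriv q (A + fun y => -B y) x
      = iteratedDeriv q A x + iteratedDeriv q (fun y => -B y) x := by
    simp only [iteratedDeriv_eq_iteratedFDeriv]
    rw [iteratedFDeriv_add_apply hA.contDiffAt (hB.neg).contDiffAt]
    simp
  have h2 : iteratedDeriv q (fun y => -B y) x = -iteratedDeriv q B x := iteratedDeriv_neg q B x
  have e : (fun y => A y - B y) = (A + fun y => -B y) := by
    funext y; simp [sub_eq_add_neg]
  rw [e, h1, h2, sub_eq_add_neg]

private lemma mvtb {v : ℝ → ℝ} {M : ℝ} (hd : Differentiable ℝ v)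
    (hb : ∀ x, |deriv v x| ≤ M) {h : ℝ} (hh : 0 ≤ h) (x : ℝ) :
    |v (x - h) - v x| ≤ h * M := by
  have key := Convex.norm_image_sub_le_of_norm_deriv_le (f := v) (C := M)
    (fun y _ => hd y) (fun y _ => hb y) (convex_univ) (Set.mem_univ x) (Set.mem_univ (x - h))
  have : ‖x - h - x‖ = h := by
    rw [Real.norm_eq_abs]
    simp [abs_of_nonneg hh]
  rw [Real.norm_eq_abs] at key
  rw [this] at key
  calc |v (x - h) - v x| ≤ M * h := key
    _ = h * M := mul_comm _ _

private lemma fdb {h : ℝ} (hh : 0 ≤ h) :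
    ∀ (q : ℕ) (v : ℝ → ℝ) (M : ℝ), ContDiff ℝ q v →
      (∀ x, |iteratedDeriv q v x| ≤ M) →
      ∀ x, |(Td h)^[q] v x| ≤ h ^ q * M := by
  intro q
  induction q with
  | zero =>
    intro v M _ hb x
    simpa using hb x
  | succ q ih =>
    intro v M hv hb x
    rw [Function.iterate_succ_apply]
    have hq : ContDiff ℝ q v := hv.of_le (by exact_mod_cast q.le_succ)
    have hsh : ContDiff ℝ q (fun y => v (y - h)) := by
      have : ContDiff ℝ q (fun y : ℝ => y - h) := (contDiff_id).sub contDiff_const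
      exact hq.comp this
    have hTv : ContDiff ℝ q (Td h v) := hsh.sub hq
    have hdiff : Differentiable ℝ (iteratedDeriv q v) :=
      hv.differentiable_iteratedDeriv q (by exact_mod_cast q.lt_succ_self)
    have hdb : ∀ x, |deriv (iteratedDeriv q v) x| ≤ M := by
      intro x
      rw [← iteratedDeriv_succ]
      exact hb x
    have hder : ∀ x, |iteratedDeriv q (Td h v) x| ≤ h * M := by
      intro x
      have e1 : iteratedDeriv q (Td h v) x
          = iteratedDeriv q v (x - h) - iteratedDeriv q v x := by
        have e2 : iteratedDeriv q (fun y => v (y - h)) x = iteratedDeriv q v (x - h) := by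
          have := iteratedDeriv_comp_add_const q v (-h)
          have e3 : (fun y : ℝ => v (y - h)) = (fun y : ℝ => v (y + (-h))) := by
            funext y; rw [sub_eq_add_neg]
          rw [e3, this]
          rw [sub_eq_add_neg]
        have : Td h v = fun y => (fun z => v (z - h)) y - v y := rfl
        rw [this, iteratedDeriv_my_sub hsh hq, e2]
      rw [e1]
      exact mvtb hdiff hdb hh x
    have := ih (Td h v) (h * M) hTv hder x
    calc |(Td h)^[q] (Td h v) x| ≤ h ^ q * (h * M) := this
      _ = h ^ (q + 1) * M := by ring

private lemma abel_one (u v : ℕ → ℂ) (B : ℕ) (h0 : u 0 = 0) (hB : u (B - 1) = 0) :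
    ∑ n ∈ range B, u n * (v (n + 1) - v n) = ∑ n ∈ range B, (u (n - 1) - u n) * v n := by
  have key : ∑ n ∈ range B, u n * v (n + 1) = ∑ n ∈ range B, u (n - 1) * v n := by
    have h1 := Finset.sum_range_succ' (fun n => u (n - 1) * v n) B
    have h2 := Finset.sum_range_succ (fun n => u (n - 1) * v n) B
    simp only [Nat.add_sub_cancel, Nat.zero_sub, h0, zero_mul, add_zero] at h1
    rw [hB, zero_mul, add_zero] at h2
    rw [← h1, h2]
  calc ∑ n ∈ range B, u n * (v (n + 1) - v n)
      = ∑ n ∈ range B, (u n * v (n + 1) - u n * v n) := by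
        apply Finset.sum_congr rfl; intro n _; ring
    _ = (∑ n ∈ range B, u n * v (n + 1)) - ∑ n ∈ range B, u n * v n :=
        Finset.sum_sub_distrib _ _
    _ = (∑ n ∈ range B, u (n - 1) * v n) - ∑ n ∈ range B, u n * v n := by rw [key]
    _ = ∑ n ∈ range B, (u (n - 1) - u n) * v n := by
        rw [← Finset.sum_sub_distrib]
        apply Finset.sum_congr rfl; intro n _; ring

private lemma abel_iter (u : ℕ → ℂ) (B : ℕ) :
    ∀ (q : ℕ) (v : ℕ → ℂ),
      (∀ i < q, (Na^[i] u) 0 = 0 ∧ (Na^[i] u) (B - 1) = 0) →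
      ∑ n ∈ range B, u n * (De^[q] v) n = ∑ n ∈ range B, (Na^[q] u) n * v n := by
  intro q
  induction q with
  | zero => intro v _; rfl
  | succ q ih =>
    intro v hyp
    rw [Function.iterate_succ_apply]
    rw [ih (De v) (fun i hi => hyp i (hi.trans q.lt_succ_self))]
    have h1 := (hyp q q.lt_succ_self).1
    have h2 := (hyp q q.lt_succ_self).2
    have := abel_one (Na^[q] u) v B h1 h2
    rw [Function.iterate_succ_apply']
    exact this

private lemma op_iter (d : ℕ) (ρ : Fin d → ℝ) :
    ∀ (q : ℕ) (f : (Fin d → AddCircle (1:ℝ)) → ℂ) (n : ℕ),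
      ((fun g : (Fin d → AddCircle (1:ℝ)) → ℂ =>
          fun θ => g (θ + fun i => ((ρ i : ℝ) : AddCircle (1:ℝ))) - g θ)^[q] f)
        (fun i => (((n : ℝ) * ρ i : ℝ) : AddCircle (1:ℝ)))
      = De^[q] (fun j : ℕ => f (fun i => (((j : ℝ) * ρ i : ℝ) : AddCircle (1:ℝ)))) n := by
  intro q
  induction q with
  | zero => intro f n; rfl
  | succ q ih =>
    intro f n
    rw [Function.iterate_succ_apply, ih, Function.iterate_succ_apply]
    have ept : ∀ j : ℕ, ((fun i => (((j : ℝ) * ρ i : ℝ) : AddCircle (1:ℝ)))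
          + fun i => ((ρ i : ℝ) : AddCircle (1:ℝ)))
        = (fun i => ((((j + 1 : ℕ) : ℝ) * ρ i : ℝ) : AddCircle (1:ℝ))) := by
      intro j
      funext i
      show (((j : ℝ) * ρ i : ℝ) : AddCircle (1:ℝ)) + ((ρ i : ℝ) : AddCircle (1:ℝ))
          = ((((j + 1 : ℕ) : ℝ) * ρ i : ℝ) : AddCircle (1:ℝ))
      rw [← AddCircle.coe_add]
      congr 1
      push_cast
      ring
    have e : (fun j : ℕ => f ((fun i => (((j : ℝ) * ρ i : ℝ) : AddCircle (1:ℝ)))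
          + fun i => ((ρ i : ℝ) : AddCircle (1:ℝ)))
          - f fun i => (((j : ℝ) * ρ i : ℝ) : AddCircle (1:ℝ)))
        = De (fun j : ℕ => f fun i => (((j : ℝ) * ρ i : ℝ) : AddCircle (1:ℝ))) := by
      funext j
      rw [ept j]
      rfl
    rw [e]

theorem stmt_5 (d m : ℕ) (w : ℝ → ℝ) (hw : ContDiff ℝ m w)
    (hsupp : Function.support w ⊆ Set.Icc 0 1) :
    ∃ c : ℝ, 0 < c ∧ ∀ (f : (Fin d → AddCircle (1:ℝ)) → ℂ), Continuous f →
      ∀ (ρ : Fin d → ℝ) (N : ℕ), 1 ≤ N →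
      ‖(N : ℂ)⁻¹ * ∑ n ∈ Finset.range N, (w (n / N) : ℂ) *
          ((fun g : (Fin d → AddCircle (1:ℝ)) → ℂ =>
              fun θ => g (θ + fun i => ((ρ i : ℝ) : AddCircle (1:ℝ))) - g θ)^[m] f)
            (fun i => (((n : ℝ) * ρ i : ℝ) : AddCircle (1:ℝ)))‖ ≤
        c * (N : ℝ) ^ (-(m : ℝ)) * ⨆ θ, ‖f θ‖ := by
  haveI : Fact ((0:ℝ) < 1) := ⟨one_pos⟩
  -- w vanishes on (-∞, 0] and [1, ∞)
  have hwz : ∀ x : ℝ, x ∉ Set.Icc (0:ℝ) 1 → w x = 0 := by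
    intro x hx
    by_contra hne
    exact hx (hsupp hne)
  have hw0 : ∀ x : ℝ, x ≤ 0 → w x = 0 := by
    intro x hx
    rcases eq_or_lt_of_le hx with rfl | hlt
    · have h1 : Set.EqOn w (fun _ => (0:ℝ)) (Set.Iio (0:ℝ)) := by
        intro y hy
        exact hwz y (fun hmem => absurd hmem.1 (not_le.2 hy))
      have h2 : Set.EqOn w (fun _ => (0:ℝ)) (closure (Set.Iio (0:ℝ))) :=
        h1.closure hw.continuous continuous_const
      have : (0:ℝ) ∈ closure (Set.Iio (0:ℝ)) := by rw [closure_Iio]; exact Set.mem_Iic.2 le_rfl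
      exact h2 this
    · exact hwz x (fun hmem => absurd hmem.1 (not_le.2 hlt))
  have hw1 : ∀ x : ℝ, 1 ≤ x → w x = 0 := by
    intro x hx
    rcases eq_or_lt_of_le hx with rfl | hlt
    · have h1 : Set.EqOn w (fun _ => (0:ℝ)) (Set.Ioi (1:ℝ)) := by
        intro y hy
        exact hwz y (fun hmem => absurd hmem.2 (not_le.2 hy))
      have h2 : Set.EqOn w (fun _ => (0:ℝ)) (closure (Set.Ioi (1:ℝ))) :=
        h1.closure hw.continuous continuous_const
      have : (1:ℝ) ∈ closure (Set.Ioi (1:ℝ)) := by rw [closure_Ioi]; exact Set.mem_Ici.2 le_rfl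
      exact h2 this
    · exact hwz x (fun hmem => absurd hmem.2 (not_le.2 hlt))
  -- bound on the m-th derivative
  have hcs : HasCompactSupport w := by
    apply IsCompact.of_isClosed_subset isCompact_Icc (isClosed_tsupport w)
    exact closure_minimal hsupp isClosed_Icc
  have hcsm : HasCompactSupport (iteratedDeriv m w) := by
    clear hw
    induction m with
    | zero => simpa [iteratedDeriv_zero] using hcs
    | succ q ihq =>
      rw [iteratedDeriv_succ]
      exact ihq.deriv
  obtain ⟨x0, hx0⟩ := ((hw.continuous_iteratedDeriv m le_rfl).abs).exists_forall_ge_of_hasCompactSupport hcsm.abs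
  set C : ℝ := |iteratedDeriv m w x0| with hCdef
  have hC : ∀ x, |iteratedDeriv m w x| ≤ C := hx0
  set M : ℝ := max C 1 with hMdef
  have hM1 : (1:ℝ) ≤ M := le_max_right _ _
  have hM0 : (0:ℝ) < M := lt_of_lt_of_le one_pos hM1
  have hCM : ∀ x, |iteratedDeriv m w x| ≤ M := fun x => (hC x).trans (le_max_left _ _)
  refine ⟨((m:ℝ) + 1) * M, by positivity, ?_⟩
  intro f hf ρ N hN
  have hN0 : (0:ℝ) < N := by exact_mod_cast Nat.lt_of_lt_of_le Nat.zero_lt_one hN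
  set h : ℝ := (N:ℝ)⁻¹ with hhdef
  have hh0 : 0 ≤ h := le_of_lt (by positivity)
  -- vanishing of iterated backward differences of w
  have vleft : ∀ (i : ℕ) (x : ℝ), x ≤ 0 → (Td h)^[i] w x = 0 := by
    intro i
    induction i with
    | zero => intro x hx; exact hw0 x hx
    | succ q ihq =>
      intro x hx
      rw [Function.iterate_succ_apply']
      show (Td h)^[q] w (x - h) - (Td h)^[q] w x = 0
      rw [ihq x hx, ihq (x - h) (by linarith), sub_zero]
  have vright : ∀ (i : ℕ) (x : ℝ), 1 + i * h ≤ x → (Td h)^[i] w x = 0 := by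
    intro i
    induction i with
    | zero => intro x hx; exact hw1 x (by simpa using hx)
    | succ q ihq =>
      intro x hx
      rw [Function.iterate_succ_apply']
      show (Td h)^[q] w (x - h) - (Td h)^[q] w x = 0
      have hq1 : (1:ℝ) + q * h ≤ x - h := by
        have : ((q:ℝ) + 1) * h = q * h + h := by ring
        push_cast at hx
        linarith
      have hq2 : (1:ℝ) + q * h ≤ x := by linarith
      rw [ihq _ hq1, ihq _ hq2, sub_zero]
  -- sequences
  set F : ℕ → ℂ := fun j => f (fun i => (((j : ℝ) * ρ i : ℝ) : AddCircle (1:ℝ))) with hFdef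
  set u : ℕ → ℂ := fun n => ((w ((n:ℝ) / N) : ℝ) : ℂ) with hudef
  have nabla_eq : ∀ (i : ℕ) (n : ℕ), (Na^[i] u) n = (((Td h)^[i] w ((n:ℝ) / N) : ℝ) : ℂ) := by
    intro i
    induction i with
    | zero => intro n; rfl
    | succ q ihq =>
      intro n
      rw [Function.iterate_succ_apply']
      show (Na^[q] u) (n - 1) - (Na^[q] u) n = _
      rw [Function.iterate_succ_apply']
      show _ = (((Td h)^[q] w ((n:ℝ)/N - h) - (Td h)^[q] w ((n:ℝ)/N) : ℝ) : ℂ)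
      rcases Nat.eq_zero_or_pos n with rfl | hn
      · have z1 : (Td h)^[q] w (0:ℝ) = 0 := vleft q 0 le_rfl
        have z2 : (Td h)^[q] w (-h) = 0 := vleft q (-h) (neg_nonpos.2 hh0)
        simp [ihq, z1, z2]
      · rw [ihq, ihq]
        have e4 : ((n - 1 : ℕ) : ℝ) / N = (n:ℝ)/N - h := by
          rw [Nat.cast_sub hn, sub_div, hhdef]
          norm_num
        rw [e4]
        push_cast
        ring
  -- the sum rewrite
  have key : ∑ n ∈ Finset.range N, (w (n / N) : ℂ) *
          ((fun g : (Fin d → AddCircle (1:ℝ)) → ℂ =>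
              fun θ => g (θ + fun i => ((ρ i : ℝ) : AddCircle (1:ℝ))) - g θ)^[m] f)
            (fun i => (((n : ℝ) * ρ i : ℝ) : AddCircle (1:ℝ)))
      = ∑ n ∈ Finset.range (N + m), (Na^[m] u) n * F n := by
    have step1 : ∀ n : ℕ, (w (n / N) : ℂ) *
          ((fun g : (Fin d → AddCircle (1:ℝ)) → ℂ =>
              fun θ => g (θ + fun i => ((ρ i : ℝ) : AddCircle (1:ℝ))) - g θ)^[m] f)
            (fun i => (((n : ℝ) * ρ i : ℝ) : AddCircle (1:ℝ)))
        = u n * (De^[m] F) n := by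
      intro n
      rw [op_iter d ρ m f n]
    rw [Finset.sum_congr rfl (fun n _ => step1 n)]
    have step2 : ∑ n ∈ Finset.range N, u n * (De^[m] F) n
        = ∑ n ∈ Finset.range (N + m), u n * (De^[m] F) n := by
      apply Finset.sum_subset (Finset.range_subset_range.2 (Nat.le_add_right N m))
      intro x _ hx
      rw [Finset.mem_range, not_lt] at hx
      have : w ((x:ℝ)/N) = 0 := hw1 _ ((one_le_div hN0).2 (by exact_mod_cast hx))
      simp [hudef, this]
    rw [step2]
    exact abel_iter u (N + m) m F (by
        intro i hi
        constructor
        · rw [nabla_eq i 0]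
          have : (Td h)^[i] w (((0:ℕ):ℝ)/N) = 0 := vleft i _ (by simp)
          rw [this]; simp
        · rw [nabla_eq i (N + m - 1)]
          have hc : ((N + m - 1 : ℕ) : ℝ) = (N:ℝ) + m - 1 := by
            have : 1 ≤ N + m := le_trans hN (Nat.le_add_right N m)
            push_cast [Nat.cast_sub this]
            ring
          have hx : (1:ℝ) + i * h ≤ ((N + m - 1 : ℕ) : ℝ) / N := by
            rw [hc, le_div_iff₀ hN0]
            have hiN : ((i:ℝ) + 1) ≤ m := by exact_mod_cast hi
            have : ((i:ℝ) * (N:ℝ)⁻¹) * N = i := by field_simp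
            calc (1 + (i:ℝ) * h) * N = N + ((i:ℝ) * (N:ℝ)⁻¹) * N := by rw [hhdef]; ring
              _ = N + i := by rw [this]
              _ ≤ (N:ℝ) + m - 1 := by linarith
          rw [vright i _ hx]; simp)
  rw [key]
  -- bounds
  have bddK : BddAbove (Set.range fun θ => ‖f θ‖) := (isCompact_range hf.norm).bddAbove
  set K : ℝ := ⨆ θ, ‖f θ‖ with hKdef
  have hK0 : 0 ≤ K := Real.iSup_nonneg (fun θ => norm_nonneg _)
  have hFK : ∀ n : ℕ, ‖F n‖ ≤ K := fun n => le_ciSup bddK _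
  have term_bound : ∀ n : ℕ, ‖(Na^[m] u) n * F n‖ ≤ (h ^ m * M) * K := by
    intro n
    rw [norm_mul]
    have h1 : ‖(Na^[m] u) n‖ ≤ h ^ m * M := by
      rw [nabla_eq m n, Complex.norm_real, Real.norm_eq_abs]
      exact fdb hh0 m w M hw hCM _
    exact mul_le_mul h1 (hFK n) (norm_nonneg _) (by positivity)
  have sum_bound : ‖∑ n ∈ Finset.range (N + m), (Na^[m] u) n * F n‖
      ≤ ((N:ℝ) + m) * ((h ^ m * M) * K) := by
    calc ‖∑ n ∈ Finset.range (N + m), (Na^[m] u) n * F n‖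
        ≤ ∑ n ∈ Finset.range (N + m), ‖(Na^[m] u) n * F n‖ := norm_sum_le _ _
      _ ≤ ∑ n ∈ Finset.range (N + m), (h ^ m * M) * K :=
          Finset.sum_le_sum (fun n _ => term_bound n)
      _ = ((N + m : ℕ) : ℝ) * ((h ^ m * M) * K) := by
          rw [Finset.sum_const, Finset.card_range, nsmul_eq_mul]
      _ = ((N:ℝ) + m) * ((h ^ m * M) * K) := by push_cast; ring
  have hrpow : (N:ℝ) ^ (-(m:ℝ)) = h ^ m := by
    rw [Real.rpow_neg (le_of_lt hN0), Real.rpow_natCast, hhdef, inv_pow]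
  rw [norm_mul, norm_inv, Complex.norm_natCast]
  calc (N:ℝ)⁻¹ * ‖∑ n ∈ Finset.range (N + m), (Na^[m] u) n * F n‖
      ≤ (N:ℝ)⁻¹ * (((N:ℝ) + m) * ((h ^ m * M) * K)) := by
        apply mul_le_mul_of_nonneg_left sum_bound (by positivity)
    _ = ((N:ℝ)⁻¹ * ((N:ℝ) + m)) * ((h ^ m * M) * K) := by ring
    _ ≤ ((m:ℝ) + 1) * ((h ^ m * M) * K) := by
        apply mul_le_mul_of_nonneg_right _ (by positivity)
        rw [inv_mul_le_iff₀ hN0]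
        have hN1 : (1:ℝ) ≤ N := by exact_mod_cast hN
        nlinarith [Nat.cast_nonneg (α := ℝ) m]
    _ = ((m:ℝ) + 1) * M * ((N:ℝ) ^ (-(m:ℝ))) * K := by rw [hrpow]; ring
end
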